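/- Consider a finite communicating MDP on S = {0, 1, …, M} that is skip-free in the negative direction (p_{ij}(a) = 0 for all j < i − 1 and a ∈ A) and satisfies: for each i ∈ {1, …, M} there is at least one a ∈ A with p_{i,i−1}(a) > 0. Then for every stationary deterministic policy d there exists a unichain stationary deterministic policy d' such that g_{d'}(j) ≤ g_d(j) for every state j ∈ S; in particular, the minimum of the expected average cost over unichain stationary deterministic policies equals the minimum over all stationary deterministic policies. -/

import Mathlib

open Finset Filter

noncomputable section

/-- A rooted tree structure on a state space `S`: a root, a parent map fixing the root,
such that iterating the parent map from any state reaches the root. -/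
structure SFTree (S : Type*) where
  root : S
  parent : S → S
  parent_root : parent root = root
  reaches_root : ∀ i : S, ∃ n : ℕ, parent^[n] i = root

namespace SFTree

variable {S : Type*} [Fintype S] [DecidableEq S]

open Classical in
/-- The set of descendants of `i`: states `j ≠ i` whose path to the root passes through `i`. -/
def desc (T : SFTree S) (i : S) : Finset S :=
  Finset.univ.filter fun j => j ≠ i ∧ ∃ n : ℕ, T.parent^[n] j = i

open Classical in
/-- The subtree rooted at `i`: `i` together with its descendants. -/
def subtree (T : SFTree S) (i : S) : Finset S :=
  Finset.univ.filter fun j => ∃ n : ℕ, T.parent^[n] j = i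

open Classical in
/-- The states strictly after `i` on the path from `i` to `j`. -/
def delta (T : SFTree S) (i j : S) : Finset S :=
  Finset.univ.filter fun r =>
    r ≠ i ∧ (∃ n : ℕ, T.parent^[n] j = r) ∧ (∃ m : ℕ, T.parent^[m] r = i)

end SFTree

/-- A finite Markov decision process: costs and transition probabilities. -/
structure MDP (S A : Type*) [Fintype S] where
  c : S → A → ℝ
  p : S → A → S → ℝ
  p_nonneg : ∀ i a j, 0 ≤ p i a j
  p_sum_one : ∀ i a, ∑ j, p i a j = 1

namespace MDP

variable {S A : Type*} [Fintype S] [DecidableEq S]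

/-- Tail probability: the probability of jumping from `i` into the subtree rooted at `k`. -/
def ptail (M : MDP S A) (T : SFTree S) (i : S) (a : A) (k : S) : ℝ :=
  ∑ s ∈ T.subtree k, M.p i a s

/-- Skip-free in the negative direction on the tree `T`: from `i ≠ root` the only possible
transitions are to the parent of `i` or into the subtree rooted at `i`. -/
def IsSkipFree (M : MDP S A) (T : SFTree S) : Prop :=
  ∀ i, i ≠ T.root → ∀ a j, M.p i a j ≠ 0 → j = T.parent i ∨ j ∈ T.subtree i

/-- Transition matrix of the stationary deterministic policy `d`. -/
def Pmat (M : MDP S A) (d : S → A) : Matrix S S ℝ :=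
  Matrix.of fun i j => M.p i (d i) j

/-- Cost vector of the stationary deterministic policy `d`. -/
def cvec (M : MDP S A) (d : S → A) : S → ℝ := fun i => M.c i (d i)

/-- Expected average cost of the stationary deterministic policy `d` starting from `i`. -/
def avgCost (M : MDP S A) (d : S → A) (i : S) : ℝ :=
  Filter.limsup
    (fun n : ℕ => (n : ℝ)⁻¹ * ∑ t ∈ Finset.range n, ((M.Pmat d ^ t).mulVec (M.cvec d)) i)
    Filter.atTop

end MDP

/-- A (substochastic) matrix is irreducible if every state can reach every other state
in a positive number of steps. -/
def MatIrreducible {S : Type*} [Fintype S] [DecidableEq S] (P : Matrix S S ℝ) : Prop :=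
  ∀ i j, ∃ n : ℕ, 0 < n ∧ 0 < (P ^ n) i j

/-- A recurrent model: every stationary deterministic policy has an irreducible
transition matrix. -/
def IsRecurrentModel {S A : Type*} [Fintype S] [DecidableEq S] (M : MDP S A) : Prop :=
  ∀ d : S → A, MatIrreducible (M.Pmat d)

/-- The probability weight of a path of length `n`. -/
def pathWt {S : Type*} [Fintype S] (P : Matrix S S ℝ) {n : ℕ} (x : Fin (n + 1) → S) : ℝ :=
  ∏ t : Fin n, P (x t.castSucc) (x t.succ)

open Classical in
/-- `E[f(X_n); τ > n]` for the chain with matrix `P` started at `z`, where `τ` is the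
first-return epoch to `z` (the first time the chain enters `z` from a state `≠ z`). -/
def retTerm {S : Type*} [Fintype S] (P : Matrix S S ℝ) (z : S) (f : S → ℝ) (n : ℕ) : ℝ :=
  ∑ x ∈ Finset.univ.filter
      (fun (x : Fin (n + 1) → S) =>
        x 0 = z ∧ ∀ t : Fin n, ¬(x t.castSucc ≠ z ∧ x t.succ = z)),
    pathWt P x * f (x (Fin.last n))

/-- `E[∑_{t=0}^{τ-1} f(X_t)]` for the chain with matrix `P` started at `z`, where `τ` is the
first-return epoch to `z`. -/
def retSum {S : Type*} [Fintype S] (P : Matrix S S ℝ) (z : S) (f : S → ℝ) : ℝ :=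
  ∑' n : ℕ, retTerm P z f n

open Classical in
/-- `E[f(X_n); σ > n]` for the chain with matrix `P` started at `i`, where `σ` is the
first-passage epoch to `z`, `σ = min {t > 0 : X_t = z}`. -/
def passTerm {S : Type*} [Fintype S] (P : Matrix S S ℝ) (i z : S) (f : S → ℝ) (n : ℕ) : ℝ :=
  ∑ x ∈ Finset.univ.filter
      (fun (x : Fin (n + 1) → S) => x 0 = i ∧ ∀ t : Fin n, x t.succ ≠ z),
    pathWt P x * f (x (Fin.last n))

/-- `E[∑_{t=0}^{σ-1} f(X_t)]` for the chain with matrix `P` started at `i`, where `σ` is the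
first-passage epoch to `z`. -/
def passSum {S : Type*} [Fintype S] (P : Matrix S S ℝ) (i z : S) (f : S → ℝ) : ℝ :=
  ∑' n : ℕ, passTerm P i z f n

end

/-- A closed communicating class of the matrix `P`: a nonempty set of mutually reachable
states that is closed under one-step transitions of positive probability. -/
def IsClosedClass {S : Type*} [Fintype S] [DecidableEq S]
    (P : Matrix S S ℝ) (E : Set S) : Prop :=
  E.Nonempty
    ∧ (∀ i ∈ E, ∀ j ∈ E, ∃ n : ℕ, 0 < (P ^ n) i j)
    ∧ (∀ i ∈ E, ∀ j, 0 < P i j → j ∈ E)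


section Aux

open Finset Filter Matrix

variable {S : Type*} [Fintype S] [DecidableEq S]

set_option linter.unusedSectionVars false
set_option maxHeartbeats 2000000

lemma stoch_mulVec_norm_le {P : Matrix S S ℝ} (h0 : ∀ i j, 0 ≤ P i j)
    (h1 : ∀ i, ∑ j, P i j = 1) (x : S → ℝ) : ‖P.mulVec x‖ ≤ ‖x‖ := by
  rcases isEmpty_or_nonempty S with hS | hS
  · simp [Subsingleton.elim (P.mulVec x) 0]
  refine (pi_norm_le_iff_of_nonneg (norm_nonneg x)).2 fun i => ?_
  have h3 : |∑ j, P i j * x j| ≤ ∑ j, P i j * |x j| := by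
    refine (Finset.abs_sum_le_sum_abs _ _).trans (le_of_eq ?_)
    exact Finset.sum_congr rfl fun j _ => by rw [abs_mul, abs_of_nonneg (h0 i j)]
  have h2 : ∑ j, P i j * |x j| ≤ ∑ j, P i j * ‖x‖ := by
    refine Finset.sum_le_sum fun j _ => mul_le_mul_of_nonneg_left ?_ (h0 i j)
    exact (norm_le_pi_norm x j)
  calc ‖P.mulVec x i‖ = |∑ j, P i j * x j| := by
        simp [Matrix.mulVec, dotProduct, Real.norm_eq_abs]
    _ ≤ ∑ j, P i j * ‖x‖ := le_trans h3 h2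
    _ = ‖x‖ := by rw [← Finset.sum_mul, h1 i, one_mul]

lemma stoch_pow_mulVec_norm_le {P : Matrix S S ℝ} (h0 : ∀ i j, 0 ≤ P i j)
    (h1 : ∀ i, ∑ j, P i j = 1) (x : S → ℝ) (t : ℕ) : ‖(P ^ t).mulVec x‖ ≤ ‖x‖ := by
  induction t with
  | zero => simp
  | succ n ih =>
    rw [pow_succ', ← Matrix.mulVec_mulVec]
    exact (stoch_mulVec_norm_le h0 h1 _).trans ih

/-- Mean ergodic theorem for a row-stochastic matrix: the Cesàro averages of the
orbit of any cost vector converge, and the limit is harmonic. -/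
lemma cesaro_exists (P : Matrix S S ℝ) (h0 : ∀ i j, 0 ≤ P i j)
    (h1 : ∀ i, ∑ j, P i j = 1) (c : S → ℝ) :
    ∃ g : S → ℝ, Tendsto (fun n : ℕ => (n : ℝ)⁻¹ • ∑ t ∈ Finset.range n, (P ^ t).mulVec c)
        atTop (nhds g) ∧ P.mulVec g = g := by
  classical
  set f : (S → ℝ) →ₗ[ℝ] (S → ℝ) := P.mulVecLin - LinearMap.id with hf
  have htel : ∀ (y : S → ℝ) (n : ℕ),
      ∑ t ∈ Finset.range n, (P ^ t).mulVec (f y) = (P ^ n).mulVec y - y := by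
    intro y n
    have h : ∀ t : ℕ, (P ^ t).mulVec (f y) = (P ^ (t+1)).mulVec y - (P ^ t).mulVec y := by
      intro t
      have h2 : f y = P.mulVec y - y := by simp [hf, Matrix.mulVecLin_apply]
      rw [h2, Matrix.mulVec_sub, Matrix.mulVec_mulVec, ← pow_succ]
    simp_rw [h]
    rw [Finset.sum_range_sub (fun t => (P ^ t).mulVec y)]
    simp
  have hrange : ∀ y : S → ℝ, Tendsto
      (fun n : ℕ => (n : ℝ)⁻¹ • ∑ t ∈ Finset.range n, (P ^ t).mulVec (f y)) atTop (nhds 0) := by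
    intro y
    apply squeeze_zero_norm (a := fun n : ℕ => (2 * ‖y‖) / n)
    · intro n
      rw [htel, norm_smul]
      have hb : ‖(P ^ n).mulVec y - y‖ ≤ 2 * ‖y‖ := by
        calc ‖(P ^ n).mulVec y - y‖ ≤ ‖(P ^ n).mulVec y‖ + ‖y‖ := norm_sub_le _ _
          _ ≤ ‖y‖ + ‖y‖ := by gcongr; exact stoch_pow_mulVec_norm_le h0 h1 y n
          _ = 2 * ‖y‖ := by ring
      calc ‖(n : ℝ)⁻¹‖ * ‖(P ^ n).mulVec y - y‖ ≤ (n : ℝ)⁻¹ * (2 * ‖y‖) := by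
            rw [Real.norm_eq_abs, abs_of_nonneg (by positivity)]
            gcongr
        _ = 2 * ‖y‖ / n := by ring
    · exact tendsto_const_div_atTop_nhds_zero_nat _
  have hker : ∀ u : S → ℝ, f u = 0 → ∀ n : ℕ, 1 ≤ n →
      (n : ℝ)⁻¹ • ∑ t ∈ Finset.range n, (P ^ t).mulVec u = u := by
    intro u hu n hn
    have hfix : P.mulVec u = u := by
      have h : P.mulVec u - u = 0 := by simpa [hf, Matrix.mulVecLin_apply] using hu
      exact sub_eq_zero.mp h
    have hpow : ∀ t : ℕ, (P ^ t).mulVec u = u := by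
      intro t
      induction t with
      | zero => simp
      | succ m ih => rw [pow_succ', ← Matrix.mulVec_mulVec, ih, hfix]
    simp_rw [hpow]
    rw [Finset.sum_const, Finset.card_range, ← Nat.cast_smul_eq_nsmul ℝ, smul_smul,
      inv_mul_cancel₀ (Nat.cast_ne_zero.mpr (by omega) : (n:ℝ) ≠ 0), one_smul]
  have hdisj : LinearMap.ker f ⊓ LinearMap.range f = ⊥ := by
    rw [Submodule.eq_bot_iff]
    rintro x ⟨hxk, y, rfl⟩
    have h2 : Tendsto (fun n : ℕ => (n : ℝ)⁻¹ • ∑ t ∈ Finset.range n, (P ^ t).mulVec (f y))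
        atTop (nhds (f y)) := by
      refine Tendsto.congr' ?_ tendsto_const_nhds
      filter_upwards [eventually_ge_atTop 1] with n hn
      exact (hker (f y) (LinearMap.mem_ker.mp hxk) n hn).symm
    exact tendsto_nhds_unique h2 (hrange y)
  have hsup : LinearMap.ker f ⊔ LinearMap.range f = ⊤ := by
    apply Submodule.eq_top_of_finrank_eq
    have h3 := Submodule.finrank_sup_add_finrank_inf_eq (LinearMap.ker f) (LinearMap.range f)
    rw [hdisj] at h3
    have h4 := LinearMap.finrank_range_add_finrank_ker f
    simp only [finrank_bot, add_zero] at h3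
    omega
  have hc : c ∈ LinearMap.ker f ⊔ LinearMap.range f := hsup ▸ Submodule.mem_top
  obtain ⟨u, hu, v, hv, rfl⟩ := Submodule.mem_sup.mp hc
  refine ⟨u, ?_, ?_⟩
  · have hlin : ∀ n : ℕ, (n : ℝ)⁻¹ • ∑ t ∈ Finset.range n, (P ^ t).mulVec (u + v)
        = ((n : ℝ)⁻¹ • ∑ t ∈ Finset.range n, (P ^ t).mulVec u)
          + ((n : ℝ)⁻¹ • ∑ t ∈ Finset.range n, (P ^ t).mulVec v) := by
      intro n
      rw [← smul_add, ← Finset.sum_add_distrib]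
      congr 1
      exact Finset.sum_congr rfl fun t _ => by rw [Matrix.mulVec_add]
    simp_rw [hlin]
    have h5 : Tendsto (fun n : ℕ => (n : ℝ)⁻¹ • ∑ t ∈ Finset.range n, (P ^ t).mulVec u)
        atTop (nhds u) := by
      refine Tendsto.congr' ?_ tendsto_const_nhds
      filter_upwards [eventually_ge_atTop 1] with n hn
      exact (hker u (LinearMap.mem_ker.mp hu) n hn).symm
    obtain ⟨y, rfl⟩ := hv
    have h6 := hrange y
    simpa using h5.add h6
  · have hfu : f u = 0 := LinearMap.mem_ker.mp hu
    have h : P.mulVec u - u = 0 := by simpa [hf, Matrix.mulVecLin_apply] using hfu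
    exact sub_eq_zero.mp h

lemma pow_entry_nonneg {P : Matrix S S ℝ} (h0 : ∀ i j, 0 ≤ P i j) :
    ∀ (n : ℕ) (i j : S), 0 ≤ (P ^ n) i j := by
  intro n
  induction n with
  | zero => intro i j; by_cases h : i = j <;> simp [pow_zero, Matrix.one_apply, h]
  | succ m ih =>
    intro i j
    rw [pow_succ, Matrix.mul_apply]
    exact Finset.sum_nonneg fun l _ => mul_nonneg (ih i l) (h0 l j)

lemma pow_rowsum {P : Matrix S S ℝ} (h1 : ∀ i, ∑ j, P i j = 1) :
    ∀ (n : ℕ) (i : S), ∑ j, (P ^ n) i j = 1 := by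
  intro n
  induction n with
  | zero => intro i; simp [pow_zero, Matrix.one_apply]
  | succ m ih =>
    intro i
    simp_rw [pow_succ, Matrix.mul_apply]
    rw [Finset.sum_comm]
    calc ∑ l, ∑ j, (P ^ m) i l * P l j = ∑ l, (P ^ m) i l * ∑ j, P l j := by
          simp_rw [Finset.mul_sum]
      _ = 1 := by simp_rw [h1]; simpa using ih i

lemma pow_pos_step' {P : Matrix S S ℝ} (h0 : ∀ i j, 0 ≤ P i j) {n : ℕ} {i k : S}
    (h : 0 < (P ^ (n + 1)) i k) : ∃ l, 0 < P i l ∧ 0 < (P ^ n) l k := by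
  rw [pow_succ', Matrix.mul_apply] at h
  obtain ⟨l, -, hl⟩ := Finset.exists_lt_of_sum_lt (f := fun _ => (0:ℝ)) (by simpa using h)
  refine ⟨l, ?_, ?_⟩
  · rcases (h0 i l).lt_or_eq with h' | h'
    · exact h'
    · exfalso; rw [← h'] at hl; simp at hl
  · rcases (pow_entry_nonneg h0 n l k).lt_or_eq with h' | h'
    · exact h'
    · exfalso; rw [← h'] at hl; simp at hl

lemma pow_pos_mul {P : Matrix S S ℝ} (h0 : ∀ i j, 0 ≤ P i j) {m n : ℕ} {i l k : S}
    (hm : 0 < (P ^ m) i l) (hn : 0 < (P ^ n) l k) : 0 < (P ^ (m + n)) i k := by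
  rw [pow_add, Matrix.mul_apply]
  have h : 0 < (P ^ m) i l * (P ^ n) l k := mul_pos hm hn
  refine lt_of_lt_of_le h ?_
  exact Finset.single_le_sum (f := fun r => (P ^ m) i r * (P ^ n) r k)
    (fun r _ => mul_nonneg (pow_entry_nonneg h0 m i r) (pow_entry_nonneg h0 n r k))
    (Finset.mem_univ l)

lemma closed_pow {P : Matrix S S ℝ} (h0 : ∀ i j, 0 ≤ P i j) {C : S → Prop}
    (hC : ∀ i, C i → ∀ j, 0 < P i j → C j) :
    ∀ (n : ℕ) (i : S), C i → ∀ j, 0 < (P ^ n) i j → C j := by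
  intro n
  induction n with
  | zero =>
    intro i hi j hj
    by_cases h : i = j
    · exact h ▸ hi
    · rw [pow_zero, Matrix.one_apply_ne h] at hj; exact absurd hj (lt_irrefl 0)
  | succ m ih =>
    intro i hi j hj
    rw [pow_succ, Matrix.mul_apply] at hj
    obtain ⟨l, -, hl⟩ := Finset.exists_lt_of_sum_lt (f := fun _ => (0:ℝ)) (by simpa using hj)
    have h1 : 0 < (P ^ m) i l ∧ 0 < P l j := by
      constructor
      · rcases (pow_entry_nonneg h0 m i l).lt_or_eq with h | h
        · exact h
        · exfalso; rw [← h] at hl; simp at hl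
      · rcases (h0 l j).lt_or_eq with h | h
        · exact h
        · exfalso; rw [← h] at hl; simp at hl
    exact hC l (ih i hi l h1.1) j h1.2

lemma pow_eq_on_closed {P P' : Matrix S S ℝ} (h0 : ∀ i j, 0 ≤ P i j) {C : S → Prop}
    (hC : ∀ i, C i → ∀ j, 0 < P i j → C j)
    (heq : ∀ i, C i → ∀ j, P' i j = P i j) :
    ∀ (n : ℕ) (i : S), C i → ∀ j, (P' ^ n) i j = (P ^ n) i j := by
  intro n
  induction n with
  | zero => intro i _ j; simp
  | succ m ih =>
    intro i hi j
    rw [pow_succ', pow_succ', Matrix.mul_apply, Matrix.mul_apply]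
    refine Finset.sum_congr rfl fun l _ => ?_
    rw [heq i hi l]
    rcases (h0 i l).lt_or_eq with h | h
    · rw [ih l (hC i hi l h) j]
    · rw [← h, zero_mul, zero_mul]

lemma exists_min_closed (P : Matrix S S ℝ) (h0 : ∀ i j, 0 ≤ P i j)
    (Z : Finset S) (hZne : Z.Nonempty) (hZcl : ∀ i ∈ Z, ∀ j, 0 < P i j → j ∈ Z) :
    ∃ E : Finset S, E.Nonempty ∧ (∀ i ∈ E, ∀ j, 0 < P i j → j ∈ E) ∧ E ⊆ Z ∧
      ∀ i ∈ E, ∀ j ∈ E, ∃ n, 0 < (P ^ n) i j := by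
  classical
  let 𝒞 : Finset (Finset S) := univ.filter fun F =>
    F.Nonempty ∧ (∀ i ∈ F, ∀ j, 0 < P i j → j ∈ F) ∧ F ⊆ Z
  have hZC : Z ∈ 𝒞 := by
    simp only [𝒞, mem_filter, mem_univ, true_and]
    exact ⟨hZne, hZcl, Finset.Subset.refl Z⟩
  obtain ⟨E, hEC, hEmin⟩ := Finset.exists_min_image 𝒞 Finset.card ⟨Z, hZC⟩
  simp only [𝒞, Finset.mem_filter, Finset.mem_univ, true_and] at hEC
  obtain ⟨hEne, hEcl, hEZ⟩ := hEC
  refine ⟨E, hEne, hEcl, hEZ, ?_⟩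
  intro i hi j hj
  set R : Finset S := univ.filter fun j => ∃ n, 0 < (P ^ n) i j with hR
  have hiR : i ∈ R := by
    simp only [hR, mem_filter, mem_univ, true_and]
    exact ⟨0, by simp [Matrix.one_apply_eq]⟩
  have hRcl : ∀ a ∈ R, ∀ b, 0 < P a b → b ∈ R := by
    intro a ha b hb
    simp only [hR, mem_filter, mem_univ, true_and] at ha ⊢
    obtain ⟨n, hn⟩ := ha
    exact ⟨n + 1, pow_pos_mul h0 hn (by simpa using hb)⟩
  have hRE : R ⊆ E := by
    intro b hb
    simp only [hR, mem_filter, mem_univ, true_and] at hb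
    obtain ⟨n, hn⟩ := hb
    exact closed_pow h0 hEcl n i hi b hn
  have hRC : R ∈ 𝒞 := by
    simp only [𝒞, mem_filter, mem_univ, true_and]
    exact ⟨⟨i, hiR⟩, hRcl, hRE.trans hEZ⟩
  have hre := Finset.eq_of_subset_of_card_le hRE (hEmin R hRC)
  rw [← hre] at hj
  simpa only [hR, mem_filter, mem_univ, true_and] using hj

/-- From a communicating MDP one can construct a stationary policy agreeing with `d` on a
given nonempty set `E` under which `E` is reachable from every state. -/
lemma exists_reach_policy {S A : Type*} [Fintype S] [DecidableEq S] [Nonempty A]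
    (Mdp : MDP S A) (E : Finset S) (hEne : E.Nonempty) (d : S → A)
    (hcomm : ∀ i j : S, ∃ e : S → A, ∃ n, 0 < ((Mdp.Pmat e) ^ n) i j) :
    ∃ d' : S → A, (∀ k ∈ E, d' k = d k) ∧
      ∀ i, ∃ n, ∃ k ∈ E, 0 < ((Mdp.Pmat d') ^ n) i k := by
  classical
  obtain ⟨z, hz⟩ := hEne
  let L : ℕ → Finset S := fun t => Nat.rec E
    (fun _ Lt => Lt ∪ univ.filter fun i => ∃ a, ∃ j ∈ Lt, 0 < Mdp.p i a j) t
  have hL0 : L 0 = E := rfl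
  have hLsucc : ∀ t, L (t+1)
      = L t ∪ univ.filter (fun i => ∃ a, ∃ j ∈ L t, 0 < Mdp.p i a j) := fun t => rfl
  have hmem : ∀ i, ∃ t, i ∈ L t := by
    intro i
    obtain ⟨e, n, hn⟩ := hcomm i z
    have key : ∀ n, ∀ i, 0 < ((Mdp.Pmat e) ^ n) i z → ∃ t, i ∈ L t := by
      intro n
      induction n with
      | zero =>
        intro i hi
        have h : i = z := by
          by_contra h
          rw [pow_zero, Matrix.one_apply_ne h] at hi
          exact lt_irrefl 0 hi
        exact ⟨0, h ▸ hz⟩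
      | succ m ih =>
        intro i hi
        obtain ⟨l, h1, h2⟩ := pow_pos_step' (fun a b => Mdp.p_nonneg a (e a) b) hi
        obtain ⟨t, ht⟩ := ih l h2
        refine ⟨t + 1, ?_⟩
        rw [hLsucc]
        refine Finset.mem_union_right _ ?_
        simp only [mem_filter, mem_univ, true_and]
        exact ⟨e i, l, ht, h1⟩
    exact key n i hn
  let rank : S → ℕ := fun i => @Nat.find (fun t => i ∈ L t) (Classical.decPred _) (hmem i)
  have hrank_mem : ∀ i, i ∈ L (rank i) := fun i => @Nat.find_spec (fun t => i ∈ L t) (Classical.decPred _) (hmem i)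
  have hrank_min : ∀ i t, t < rank i → i ∉ L t := fun i t ht => @Nat.find_min (fun t => i ∈ L t) (Classical.decPred _) (hmem i) t ht
  have key : ∀ i, ∃ a, (i ∈ E → a = d i) ∧
      (i ∉ E → ∃ j, 0 < Mdp.p i a j ∧ rank j < rank i) := by
    intro i
    by_cases hi : i ∈ E
    · exact ⟨d i, fun _ => rfl, fun h => absurd hi h⟩
    · have h0 : rank i ≠ 0 := by
        intro h
        apply hi
        have hm := hrank_mem i
        rwa [h, hL0] at hm
      obtain ⟨s, hs⟩ := Nat.exists_eq_succ_of_ne_zero h0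
      have hmem' := hrank_mem i
      rw [hs, hLsucc] at hmem'
      rcases Finset.mem_union.mp hmem' with h | h
      · exact absurd h (hrank_min i s (by omega))
      · simp only [mem_filter, mem_univ, true_and] at h
        obtain ⟨a, j, hj, hpj⟩ := h
        refine ⟨a, fun h => absurd h hi, fun _ => ⟨j, hpj, ?_⟩⟩
        have hle : rank j ≤ s := @Nat.find_le _ _ (Classical.decPred _) (hmem j) hj
        omega
  choose d' hd'E hd'step using key
  refine ⟨d', hd'E, ?_⟩
  have main : ∀ r, ∀ i, rank i = r → ∃ n, ∃ k ∈ E, 0 < ((Mdp.Pmat d') ^ n) i k := by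
    intro r
    induction r using Nat.strong_induction_on with
    | _ r IH =>
      intro i hr
      by_cases hi : i ∈ E
      · exact ⟨0, i, hi, by simp [Matrix.one_apply_eq]⟩
      · obtain ⟨j, hpj, hrk⟩ := hd'step i hi
        obtain ⟨n, k, hk, hpos⟩ := IH (rank j) (hr ▸ hrk) j rfl
        refine ⟨1 + n, k, hk, ?_⟩
        refine pow_pos_mul (P := Mdp.Pmat d') (fun a b => Mdp.p_nonneg a (d' a) b) ?_ hpos
        simpa [MDP.Pmat] using hpj
  exact fun i => main (rank i) i rfl

end Aux

/-- for a finite communicating skip-free MDP on `{0,…,M}` (with every state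
`i ≥ 1` having some action moving down with positive probability), every stationary
deterministic policy is dominated, in average cost from every starting state, by a unichain
stationary deterministic policy; in particular, for every starting state the minimum of the
average cost over unichain policies equals the minimum over all policies. -/
theorem stmt14 {M : ℕ} {A : Type*} [Fintype A] [Nonempty A]
    (Mdp : MDP (Fin (M + 1)) A)
    (hsf : ∀ (i j : Fin (M + 1)) (a : A), (j : ℕ) + 1 < (i : ℕ) → Mdp.p i a j = 0)
    (hB : ∀ i : Fin (M + 1), i ≠ 0 → ∃ a : A, 0 < Mdp.p i a (i - 1))
    (hcomm : ∀ i j : Fin (M + 1), ∃ d : Fin (M + 1) → A, ∃ n : ℕ, 0 < ((Mdp.Pmat d) ^ n) i j) :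
    (∀ d : Fin (M + 1) → A, ∃ d' : Fin (M + 1) → A,
      (∃! E : Set (Fin (M + 1)), IsClosedClass (Mdp.Pmat d') E)
      ∧ ∀ j, Mdp.avgCost d' j ≤ Mdp.avgCost d j)
    ∧ ∀ j : Fin (M + 1),
      (⨅ d' : {dd : Fin (M + 1) → A //
          ∃! E : Set (Fin (M + 1)), IsClosedClass (Mdp.Pmat dd) E},
        Mdp.avgCost (d' : Fin (M + 1) → A) j)
      = ⨅ d : Fin (M + 1) → A, Mdp.avgCost d j := by
  classical
  have part1 : ∀ d : Fin (M + 1) → A, ∃ d' : Fin (M + 1) → A,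
      (∃! E : Set (Fin (M + 1)), IsClosedClass (Mdp.Pmat d') E)
      ∧ ∀ j, Mdp.avgCost d' j ≤ Mdp.avgCost d j := by
    intro d
    set P := Mdp.Pmat d with hPdef
    have hP0 : ∀ i j, 0 ≤ P i j := fun i j => Mdp.p_nonneg i (d i) j
    have hP1 : ∀ i, ∑ j, P i j = 1 := fun i => Mdp.p_sum_one i (d i)
    obtain ⟨g, hgconv, hgfix⟩ := cesaro_exists P hP0 hP1 (Mdp.cvec d)
    have havg : ∀ i, Mdp.avgCost d i = g i := by
      intro i
      have h := tendsto_pi_nhds.mp hgconv i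
      have heq : (fun n : ℕ =>
          ((n : ℝ)⁻¹ • ∑ t ∈ Finset.range n, (P ^ t).mulVec (Mdp.cvec d)) i)
          = fun n : ℕ => (n : ℝ)⁻¹
              * ∑ t ∈ Finset.range n, ((P ^ t).mulVec (Mdp.cvec d)) i := by
        funext n; simp [Finset.sum_apply]
      rw [heq] at h
      exact h.limsup_eq
    obtain ⟨z, -, hzmin⟩ := Finset.exists_min_image (univ : Finset (Fin (M + 1))) g
      Finset.univ_nonempty
    set gs := g z with hgsdef
    have hglb : ∀ j, gs ≤ g j := fun j => hzmin j (mem_univ j)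
    set Z : Finset (Fin (M + 1)) := univ.filter fun i => g i = gs with hZdef
    have hzZ : z ∈ Z := by simp [hZdef, hgsdef]
    have hZcl : ∀ i ∈ Z, ∀ j, 0 < P i j → j ∈ Z := by
      intro i hi j hij
      simp only [hZdef, mem_filter, mem_univ, true_and] at hi ⊢
      have h1' : (P.mulVec g) i = ∑ k, P i k * g k := by
        simp [Matrix.mulVec, dotProduct]
      have hgi : ∑ k, P i k * g k = g i := by
        have h := congrFun hgfix i
        rw [h1'] at h; exact h
      have h2 : ∑ k, P i k * gs = gs := by rw [← Finset.sum_mul, hP1 i, one_mul]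
      have hsum : ∑ k, P i k * (g k - gs) = 0 := by
        simp_rw [mul_sub]
        rw [Finset.sum_sub_distrib, hgi, h2, hi, sub_self]
      have hterm := (Finset.sum_eq_zero_iff_of_nonneg
        (fun k _ => mul_nonneg (hP0 i k) (by linarith [hglb k]))).mp hsum j (mem_univ j)
      rcases mul_eq_zero.mp hterm with h | h
      · exact absurd h (ne_of_gt hij)
      · have := hglb j; linarith
    obtain ⟨E, hEne, hEcl, hEZ, hEcomm⟩ := exists_min_closed P hP0 Z ⟨z, hzZ⟩ hZcl
    obtain ⟨d', hd'E, hreach⟩ := exists_reach_policy Mdp E hEne d (fun i j => hcomm i j)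
    set P' := Mdp.Pmat d' with hP'def
    have hP'0 : ∀ i j, 0 ≤ P' i j := fun i j => Mdp.p_nonneg i (d' i) j
    have hP'1 : ∀ i, ∑ j, P' i j = 1 := fun i => Mdp.p_sum_one i (d' i)
    have hPeq : ∀ i ∈ E, ∀ j, P' i j = P i j := by
      intro i hi j
      simp only [hP'def, hPdef, MDP.Pmat, Matrix.of_apply]
      rw [hd'E i hi]
    have hE'cl : ∀ i ∈ E, ∀ j, 0 < P' i j → j ∈ E := by
      intro i hi j h
      rw [hPeq i hi j] at h
      exact hEcl i hi j h
    have hpowEq : ∀ n, ∀ i ∈ E, ∀ j, (P' ^ n) i j = (P ^ n) i j :=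
      fun n i hi j =>
        pow_eq_on_closed hP0 (C := (· ∈ E)) (fun a ha b hb => hEcl a ha b hb)
          (fun a ha b => hPeq a ha b) n i hi j
    obtain ⟨g', hg'conv, hg'fix⟩ := cesaro_exists P' hP'0 hP'1 (Mdp.cvec d')
    have havg' : ∀ i, Mdp.avgCost d' i = g' i := by
      intro i
      have h := tendsto_pi_nhds.mp hg'conv i
      have heq : (fun n : ℕ =>
          ((n : ℝ)⁻¹ • ∑ t ∈ Finset.range n, (P' ^ t).mulVec (Mdp.cvec d')) i)
          = fun n : ℕ => (n : ℝ)⁻¹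
              * ∑ t ∈ Finset.range n, ((P' ^ t).mulVec (Mdp.cvec d')) i := by
        funext n; simp [Finset.sum_apply]
      rw [heq] at h
      exact h.limsup_eq
    have hgE : ∀ k ∈ E, g k = gs := by
      intro k hk
      have h := hEZ hk
      simp only [hZdef, mem_filter, mem_univ, true_and] at h
      exact h
    have hseq : ∀ k ∈ E, ∀ t,
        ((P' ^ t).mulVec (Mdp.cvec d')) k = ((P ^ t).mulVec (Mdp.cvec d)) k := by
      intro k hk t
      simp only [Matrix.mulVec, dotProduct]
      refine Finset.sum_congr rfl fun j _ => ?_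
      show (P' ^ t) k j * Mdp.cvec d' j = (P ^ t) k j * Mdp.cvec d j
      rw [hpowEq t k hk j]
      by_cases hj : j ∈ E
      · simp only [MDP.cvec]; rw [hd'E j hj]
      · have hz0 : (P ^ t) k j = 0 := by
          by_contra h
          have hpos : 0 < (P ^ t) k j := (pow_entry_nonneg hP0 t k j).lt_of_ne (Ne.symm h)
          exact hj (closed_pow hP0 (C := (· ∈ E)) (fun a ha b hb => hEcl a ha b hb)
            t k hk j hpos)
        rw [hz0, zero_mul, zero_mul]
    have hg'E : ∀ k ∈ E, g' k = gs := by
      intro k hk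
      have h1 := tendsto_pi_nhds.mp hg'conv k
      have h2 := tendsto_pi_nhds.mp hgconv k
      have heqf : (fun n : ℕ =>
          ((n:ℝ)⁻¹ • ∑ t ∈ Finset.range n, (P' ^ t).mulVec (Mdp.cvec d')) k)
          = (fun n : ℕ =>
          ((n:ℝ)⁻¹ • ∑ t ∈ Finset.range n, (P ^ t).mulVec (Mdp.cvec d)) k) := by
        funext n
        simp only [Pi.smul_apply, Finset.sum_apply, smul_eq_mul]
        congr 1
        exact Finset.sum_congr rfl fun t _ => hseq k hk t
      rw [heqf] at h1
      rw [tendsto_nhds_unique h1 h2]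
      exact hgE k hk
    -- geometric absorption estimates
    set Ec : Finset (Fin (M + 1)) := univ.filter (fun k => k ∉ E) with hEcdef
    set φ : ℕ → Fin (M + 1) → ℝ := fun m l => ∑ k ∈ Ec, (P' ^ m) l k with hφdef
    have hφfilter : ∀ m l, φ m l = ∑ k, if k ∉ E then (P' ^ m) l k else 0 := by
      intro m l
      simp only [hφdef, hEcdef]
      exact Finset.sum_filter _ _
    have hφnn : ∀ m l, 0 ≤ φ m l :=
      fun m l => Finset.sum_nonneg fun k _ => pow_entry_nonneg hP'0 m l k
    have hφ0 : ∀ m, ∀ l ∈ E, φ m l = 0 := by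
      intro m l hl
      refine Finset.sum_eq_zero fun k hk => ?_
      simp only [hEcdef, mem_filter, mem_univ, true_and] at hk
      by_contra h
      exact hk (closed_pow hP'0 (C := (· ∈ E)) (fun a ha b hb => hE'cl a ha b hb) m l hl k
        ((pow_entry_nonneg hP'0 m l k).lt_of_ne (Ne.symm h)))
    have hφle1 : ∀ m l, φ m l ≤ 1 := by
      intro m l
      calc φ m l ≤ ∑ k, (P' ^ m) l k :=
            Finset.sum_le_sum_of_subset_of_nonneg (Finset.filter_subset _ _)
              (fun k _ _ => pow_entry_nonneg hP'0 m l k)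
        _ = 1 := pow_rowsum hP'1 m l
    have hφdecomp : ∀ m m' l, φ (m + m') l = ∑ j, (P' ^ m) l j * φ m' j := by
      intro m m' l
      calc φ (m + m') l = ∑ k ∈ Ec, ∑ j, (P' ^ m) l j * (P' ^ m') j k := by
            refine Finset.sum_congr rfl fun k _ => ?_
            rw [pow_add, Matrix.mul_apply]
        _ = ∑ j, ∑ k ∈ Ec, (P' ^ m) l j * (P' ^ m') j k := Finset.sum_comm
        _ = ∑ j, (P' ^ m) l j * φ m' j := by
            refine Finset.sum_congr rfl fun j _ => ?_
            rw [← Finset.mul_sum]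
    have hφanti : ∀ m l, φ (m + 1) l ≤ φ m l := by
      intro m l
      rw [hφdecomp m 1 l]
      calc ∑ j, (P' ^ m) l j * φ 1 j
          ≤ ∑ j, (if j ∉ E then (P' ^ m) l j else 0) := by
            refine Finset.sum_le_sum fun j _ => ?_
            by_cases hj : j ∈ E
            · simp [hj, hφ0 1 j hj]
            · simp only [hj, not_false_iff, if_true]
              calc (P' ^ m) l j * φ 1 j ≤ (P' ^ m) l j * 1 :=
                    mul_le_mul_of_nonneg_left (hφle1 1 j) (pow_entry_nonneg hP'0 m l j)
                _ = (P' ^ m) l j := mul_one _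
        _ = φ m l := (hφfilter m l).symm
    have hφmono : ∀ l m m', m ≤ m' → φ m' l ≤ φ m l := by
      intro l m m' h
      induction m', h using Nat.le_induction with
      | base => exact le_rfl
      | succ n hn ih => exact (hφanti n l).trans ih
    have hφlt1 : ∀ l, ∃ n, φ n l < 1 := by
      intro l
      obtain ⟨n, k, hk, hpos⟩ := hreach l
      refine ⟨n, ?_⟩
      have hsub : Ec ⊆ univ.erase k := by
        intro x hx
        simp only [hEcdef, mem_filter, mem_univ, true_and] at hx
        exact Finset.mem_erase.mpr ⟨fun h => hx (h ▸ hk), mem_univ x⟩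
      calc φ n l ≤ ∑ x ∈ univ.erase k, (P' ^ n) l x :=
            Finset.sum_le_sum_of_subset_of_nonneg hsub
              (fun x _ _ => pow_entry_nonneg hP'0 n l x)
        _ = (∑ x, (P' ^ n) l x) - (P' ^ n) l k := Finset.sum_erase_eq_sub (mem_univ k)
        _ = 1 - (P' ^ n) l k := by rw [pow_rowsum hP'1 n l]
        _ < 1 := by linarith
    choose N hN using hφlt1
    set m₀ := Finset.univ.sup N with hm₀def
    have hφm₀ : ∀ l, φ m₀ l < 1 :=
      fun l => lt_of_le_of_lt (hφmono l (N l) m₀ (Finset.le_sup (mem_univ l))) (hN l)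
    set β := Finset.univ.sup' Finset.univ_nonempty (fun l => φ m₀ l) with hβdef
    have hβ1 : β < 1 := (Finset.sup'_lt_iff _).mpr fun l _ => hφm₀ l
    have hφβ : ∀ l, φ m₀ l ≤ β := fun l => Finset.le_sup' _ (mem_univ l)
    have hβ0 : (0:ℝ) ≤ β := le_trans (hφnn m₀ z) (hφβ z)
    have hgeo : ∀ q l, φ (q * m₀) l ≤ β ^ q := by
      intro q
      induction q with
      | zero => intro l; simpa using hφle1 0 l
      | succ q ih =>
        intro l
        have h1 : (q + 1) * m₀ = m₀ + q * m₀ := by ring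
        rw [h1, hφdecomp m₀ (q * m₀) l]
        calc ∑ j, (P' ^ m₀) l j * φ (q * m₀) j
            ≤ ∑ j, (if j ∉ E then (P' ^ m₀) l j else 0) * β ^ q := by
              refine Finset.sum_le_sum fun j _ => ?_
              by_cases hj : j ∈ E
              · simp [hj, hφ0 _ j hj]
              · simp only [hj, not_false_iff, if_true]
                exact mul_le_mul_of_nonneg_left (ih j) (pow_entry_nonneg hP'0 m₀ l j)
          _ = φ m₀ l * β ^ q := by rw [← Finset.sum_mul, ← hφfilter m₀ l]
          _ ≤ β * β ^ q := mul_le_mul_of_nonneg_right (hφβ l) (pow_nonneg hβ0 q)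
          _ = β ^ (q + 1) := (pow_succ' β q).symm
    have hiter : ∀ m, (P' ^ m).mulVec g' = g' := by
      intro m
      induction m with
      | zero => simp
      | succ k ih => rw [pow_succ', ← Matrix.mulVec_mulVec, ih, hg'fix]
    obtain ⟨C, hC0, hCle⟩ : ∃ C : ℝ, 0 ≤ C ∧ ∀ k, |g' k - gs| ≤ C := by
      refine ⟨Finset.univ.sup' Finset.univ_nonempty (fun k => |g' k - gs|), ?_, fun k =>
        Finset.le_sup' (fun k => |g' k - gs|) (mem_univ k)⟩
      exact le_trans (abs_nonneg _)
        (Finset.le_sup' (fun k => |g' k - gs|) (mem_univ z))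
    have hbound : ∀ q j, |g' j - gs| ≤ C * β ^ q := by
      intro q j
      set m := q * m₀ with hmdef
      have hrow : ∑ k, (P' ^ m) j k = 1 := pow_rowsum hP'1 m j
      have hmv : ∑ k, (P' ^ m) j k * g' k = g' j := by
        have h := congrFun (hiter m) j
        simpa [Matrix.mulVec, dotProduct] using h
      have hdiff : g' j - gs = ∑ k, (P' ^ m) j k * (g' k - gs) := by
        simp_rw [mul_sub]
        rw [Finset.sum_sub_distrib, hmv, ← Finset.sum_mul, hrow, one_mul]
      calc |g' j - gs| ≤ ∑ k, (P' ^ m) j k * |g' k - gs| := by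
            rw [hdiff]
            refine (Finset.abs_sum_le_sum_abs _ _).trans (le_of_eq ?_)
            exact Finset.sum_congr rfl fun k _ => by
              rw [abs_mul, abs_of_nonneg (pow_entry_nonneg hP'0 m j k)]
        _ ≤ ∑ k, (if k ∉ E then (P' ^ m) j k else 0) * C := by
            refine Finset.sum_le_sum fun k _ => ?_
            by_cases hk : k ∈ E
            · simp [hk, hg'E k hk]
            · simp only [hk, not_false_iff, if_true]
              exact mul_le_mul_of_nonneg_left (hCle k) (pow_entry_nonneg hP'0 m j k)
        _ = φ m j * C := by rw [← Finset.sum_mul, ← hφfilter m j]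
        _ ≤ β ^ q * C := mul_le_mul_of_nonneg_right (hgeo q j) hC0
        _ = C * β ^ q := mul_comm _ _
    have hg'all : ∀ j, g' j = gs := by
      intro j
      have htend : Tendsto (fun q : ℕ => C * β ^ q) atTop (nhds 0) := by
        simpa using (tendsto_pow_atTop_nhds_zero_of_lt_one hβ0 hβ1).const_mul C
      have h := ge_of_tendsto' htend (fun q => hbound q j)
      have h2 : |g' j - gs| = 0 := le_antisymm h (abs_nonneg _)
      have h3 := abs_eq_zero.mp h2
      linarith
    -- the unique closed class
    have hclass : IsClosedClass P' (↑E : Set (Fin (M + 1))) := by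
      refine ⟨by exact_mod_cast hEne.to_set, ?_, ?_⟩
      · intro i hi j hj
        obtain ⟨n, hn⟩ := hEcomm i hi j hj
        exact ⟨n, by rw [hpowEq n i hi j]; exact hn⟩
      · intro i hi j hj
        exact hE'cl i hi j hj
    have huniq : ∀ F : Set (Fin (M + 1)), IsClosedClass P' F → F = ↑E := by
      intro F hF
      obtain ⟨⟨i, hi⟩, hFcomm, hFcl⟩ := hF
      obtain ⟨n, k, hk, hpos⟩ := hreach i
      have hkF : k ∈ F := closed_pow hP'0 (C := (· ∈ F)) hFcl n i hi k hpos
      apply Set.eq_of_subset_of_subset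
      · intro j hj
        obtain ⟨n', hn'⟩ := hFcomm k hkF j hj
        exact closed_pow hP'0 (C := (· ∈ (↑E : Set (Fin (M + 1)))))
          (fun a ha b hb => hE'cl a ha b hb) n' k hk j hn'
      · intro j hj
        obtain ⟨n', hn'⟩ := hEcomm k hk j hj
        rw [← hpowEq n' k hk j] at hn'
        exact closed_pow hP'0 (C := (· ∈ F)) hFcl n' k hkF j hn'
    refine ⟨d', ⟨↑E, hclass, huniq⟩, ?_⟩
    intro j
    rw [havg' j, hg'all j, havg j]
    exact hglb j
  refine ⟨part1, fun j => ?_⟩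
  have hne : Nonempty {dd : Fin (M + 1) → A //
      ∃! E : Set (Fin (M + 1)), IsClosedClass (Mdp.Pmat dd) E} := by
    obtain ⟨d', hu, -⟩ := part1 (Classical.arbitrary _)
    exact ⟨⟨d', hu⟩⟩
  haveI := hne
  apply le_antisymm
  · refine le_ciInf fun d => ?_
    obtain ⟨d', hu, hle⟩ := part1 d
    have hstep := ciInf_le
      (f := fun d'' : {dd : Fin (M + 1) → A //
          ∃! E : Set (Fin (M + 1)), IsClosedClass (Mdp.Pmat dd) E} =>
        Mdp.avgCost (d'' : Fin (M + 1) → A) j)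
      (Set.Finite.bddBelow (Set.finite_range _)) ⟨d', hu⟩
    exact le_trans hstep (hle j)
  · refine le_ciInf fun d' => ?_
    exact ciInf_le (Set.Finite.bddBelow (Set.finite_range _)) d'.1
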